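/- Let μ_{12}, μ_{13}, μ_{23}, μ_{123}, μ̄_1, μ̄_2, μ̄_3 be real numbers (with λ_i = (1−μ̄_i)/2 ∈ [0,1]), arising as the central moments and means of some joint probability distribution P on {0,1}³. Set Det P = μ_{123}² + 4μ_{12}μ_{13}μ_{23}. Suppose: (i) μ_{12}μ_{13}μ_{23} ≥ 0; (ii) μ_{12}²μ_{13}² + μ_{12}²μ_{23}² + μ_{13}²μ_{23}² ≤ Det P ≤ min_{i<j} μ_{ij}²; (iii) Det P ≤ ((1 ± μ̄_i)μ_{jk} ∓ μ_{123})² for all i and {j,k} = {1,2,3}∖{i} (both sign choices). If Det P > 0, then setting μ̄_h² = μ_{123}²/Det P and η_{h,i}² = Det P / μ_{jk}², one has μ̄_h² ∈ [0,1], and there exists a choice of signs for μ̄_h and η_{h,1}, η_{h,2}, η_{h,3} such that μ_{ij} = ¼(1−μ̄_h²)η_{h,i}η_{h,j} for all i<j and μ_{123} = ¼(1−μ̄_h²)μ̄_h η_{h,1}η_{h,2}η_{h,3}. -/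

import Mathlib

open Finset

noncomputable def EV3 (p : (Fin 3 → Fin 2) → ℝ) (i : Fin 3) : ℝ :=
  ∑ x : Fin 3 → Fin 2, p x * ((x i : ℕ) : ℝ)

noncomputable def cov3 (p : (Fin 3 → Fin 2) → ℝ) (i j : Fin 3) : ℝ :=
  ∑ x : Fin 3 → Fin 2, p x * (((x i : ℕ) : ℝ) - EV3 p i) * (((x j : ℕ) : ℝ) - EV3 p j)

noncomputable def thirdCentral3 (p : (Fin 3 → Fin 2) → ℝ) : ℝ :=
  ∑ x : Fin 3 → Fin 2, p x * ∏ i : Fin 3, (((x i : ℕ) : ℝ) - EV3 p i)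

set_option maxHeartbeats 1000000 in
/-- (Constructive direction of the semialgebraic description of the
tripod model.) Given moments of a joint distribution on `{0,1}³` satisfying the tripod
inequalities with `Det P > 0`, one has `μ_{123}²/Det P ∈ [0,1]` and there is a choice of
signs of the parameters `μ̄_h, η_{h,1}, η_{h,2}, η_{h,3}` (whose squares are determined
by the moments) realizing the monomial parametrization. -/
theorem tripod_reconstruction (m12 m13 m23 m123 b1 b2 b3 DetP : ℝ)
    (hl1 : (1 - b1) / 2 ∈ Set.Icc (0:ℝ) 1) (hl2 : (1 - b2) / 2 ∈ Set.Icc (0:ℝ) 1)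
    (hl3 : (1 - b3) / 2 ∈ Set.Icc (0:ℝ) 1)
    (hdist : ∃ p : (Fin 3 → Fin 2) → ℝ, (∀ x, 0 ≤ p x) ∧ (∑ x : Fin 3 → Fin 2, p x = 1) ∧
      EV3 p 0 = (1 - b1) / 2 ∧ EV3 p 1 = (1 - b2) / 2 ∧ EV3 p 2 = (1 - b3) / 2 ∧
      cov3 p 0 1 = m12 ∧ cov3 p 0 2 = m13 ∧ cov3 p 1 2 = m23 ∧ thirdCentral3 p = m123)
    (hDet : DetP = m123 ^ 2 + 4 * m12 * m13 * m23)
    (h1 : 0 ≤ m12 * m13 * m23)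
    (h2 : m12 ^ 2 * m13 ^ 2 + m12 ^ 2 * m23 ^ 2 + m13 ^ 2 * m23 ^ 2 ≤ DetP)
    (h2' : DetP ≤ min (min (m12 ^ 2) (m13 ^ 2)) (m23 ^ 2))
    (h3a : DetP ≤ ((1 + b1) * m23 - m123) ^ 2) (h3a' : DetP ≤ ((1 - b1) * m23 + m123) ^ 2)
    (h3b : DetP ≤ ((1 + b2) * m13 - m123) ^ 2) (h3b' : DetP ≤ ((1 - b2) * m13 + m123) ^ 2)
    (h3c : DetP ≤ ((1 + b3) * m12 - m123) ^ 2) (h3c' : DetP ≤ ((1 - b3) * m12 + m123) ^ 2)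
    (hpos : 0 < DetP) :
    m123 ^ 2 / DetP ∈ Set.Icc (0:ℝ) 1 ∧
      ∃ mh e1 e2 e3 : ℝ,
        mh ^ 2 = m123 ^ 2 / DetP ∧
        e1 ^ 2 = DetP / m23 ^ 2 ∧ e2 ^ 2 = DetP / m13 ^ 2 ∧ e3 ^ 2 = DetP / m12 ^ 2 ∧
        m12 = 1 / 4 * (1 - mh ^ 2) * e1 * e2 ∧
        m13 = 1 / 4 * (1 - mh ^ 2) * e1 * e3 ∧
        m23 = 1 / 4 * (1 - mh ^ 2) * e2 * e3 ∧
        m123 = 1 / 4 * (1 - mh ^ 2) * mh * e1 * e2 * e3 := by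

  have hmin := h2'
  rw [le_min_iff, le_min_iff] at hmin
  have h12 : m12 ≠ 0 := by intro h; rw [h] at hmin; nlinarith [hmin.1.1]
  have h13 : m13 ≠ 0 := by intro h; rw [h] at hmin; nlinarith [hmin.1.2]
  have h23 : m23 ≠ 0 := by intro h; rw [h] at hmin; nlinarith [hmin.2]
  have hD : DetP ≠ 0 := ne_of_gt hpos
  obtain ⟨s, hsne, hs⟩ : ∃ s : ℝ, s ≠ 0 ∧ s ^ 2 = DetP := by
    refine ⟨Real.sqrt DetP, ?_, Real.sq_sqrt hpos.le⟩
    positivity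
  have hkey : s ^ 2 = m123 ^ 2 + 4 * m12 * m13 * m23 := hs.trans hDet
  have hone : 1 - (m123 / s) ^ 2 = 4 * m12 * m13 * m23 / s ^ 2 := by
    field_simp; linarith [hkey]
  constructor
  · constructor
    · positivity
    · rw [div_le_one hpos]; nlinarith
  · clear hdist h3a h3a' h3b h3b' h3c h3c' h2 h2' hmin hl1 hl2 hl3
    refine ⟨m123 / s, s / m23, s / m13, s / m12, ?_, ?_, ?_, ?_, ?_, ?_, ?_, ?_⟩
    · rw [div_pow, hs]
    · rw [div_pow, hs]
    · rw [div_pow, hs]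
    · rw [div_pow, hs]
    · rw [hone]; field_simp
    · rw [hone]; field_simp
    · rw [hone]; field_simp
    · rw [hone]; field_simp
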